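/- Let X be an n×n positive semidefinite complex matrix. Then for all indices i, j, the diagonal entries X i i and X j j are real and satisfy Real.sqrt((2·Re(X i j))² + (2·Im(X i j))² + (Re(X i i) − Re(X j j))²) ≤ Re(X i i) + Re(X j j). -/

import Mathlib

open ComplexOrder

private lemma psd_quad_nonneg {n : ℕ} {X : Matrix (Fin n) (Fin n) ℂ} (hX : X.PosSemidef)
    (i j : Fin n) (a b : ℂ) :
    0 ≤ (star a * (X i i * a + X i j * b) + star b * (X j i * a + X j j * b)).re := by
  have h := hX.re_dotProduct_nonneg (Pi.single i a + Pi.single j b)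
  rw [Matrix.mulVec_add, Matrix.mulVec_single, Matrix.mulVec_single, star_add,
    ← Pi.single_star, ← Pi.single_star,
    add_dotProduct, dotProduct_add, dotProduct_add,
    single_dotProduct, single_dotProduct, single_dotProduct,
    single_dotProduct] at h
  simp only [Pi.smul_apply, op_smul_eq_mul, Matrix.col_apply, RCLike.re_to_complex] at h
  convert h using 3 <;> ring

theorem psd_entries_satisfy_socp {n : ℕ}
    (X : Matrix (Fin n) (Fin n) ℂ) (hX : X.PosSemidef) (i j : Fin n) :
    (X i i).im = 0 ∧ (X j j).im = 0 ∧
      Real.sqrt ((2 * (X i j).re) ^ 2 + (2 * (X i j).im) ^ 2 +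
          ((X i i).re - (X j j).re) ^ 2) ≤ (X i i).re + (X j j).re := by
  have herm : ∀ k l, (starRingEnd ℂ) (X k l) = X l k := by
    intro k l
    have := congrFun (congrFun hX.1 l) k
    simpa [Matrix.conjTranspose_apply] using this
  have himi : (X i i).im = 0 := by
    have := herm i i
    have h2 := congrArg Complex.im this
    simp [Complex.conj_im] at h2
    linarith
  have himj : (X j j).im = 0 := by
    have := herm j j
    have h2 := congrArg Complex.im this
    simp [Complex.conj_im] at h2
    linarith
  set p := (X i i).re
  set q := (X j j).re
  set a := (X i j).re
  set b := (X i j).im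
  have hp : 0 ≤ p := by
    have := psd_quad_nonneg hX i i 1 0
    simpa [p] using this
  have hq : 0 ≤ q := by
    have := psd_quad_nonneg hX j j 1 0
    simpa [q] using this
  have hs : a ^ 2 + b ^ 2 ≤ p * q := by
    by_cases hij : i = j
    · subst hij
      have hb : b = 0 := himi
      have : a = p := rfl
      nlinarith
    · set s := a ^ 2 + b ^ 2 with hs_def
      have key : ∀ t : ℝ, 0 ≤ q * (t * t) + (2 * s) * t + s * p := by
        intro t
        have h := psd_quad_nonneg hX i j (X i j) (t : ℂ)
        have hji : X j i = (starRingEnd ℂ) (X i j) := (herm i j).symm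
        rw [hji] at h
        have : (star (X i j) * (X i i * X i j + X i j * (t:ℂ)) +
            star (t:ℂ) * ((starRingEnd ℂ) (X i j) * X i j + X j j * (t:ℂ))).re
            = q * (t * t) + (2 * s) * t + s * p := by
          simp [Complex.mul_re, Complex.add_re, Complex.mul_im, Complex.add_im,
            Complex.conj_re, Complex.conj_im, p, q, a, b, s, himi, himj]
          ring
        linarith [h, this ▸ h]
      have hdisc := discrim_le_zero key
      rw [discrim] at hdisc
      have hsnn : 0 ≤ s := by positivity
      have h4 : s * s ≤ s * (p * q) := by nlinarith
      rcases eq_or_lt_of_le hsnn with h0 | h0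
      · rw [hs_def] at h0; nlinarith
      · nlinarith
  have hsum : 0 ≤ p + q := by linarith
  have hsq : (2 * a) ^ 2 + (2 * b) ^ 2 + (p - q) ^ 2 ≤ (p + q) ^ 2 := by nlinarith
  refine ⟨himi, himj, ?_⟩
  calc Real.sqrt ((2 * a) ^ 2 + (2 * b) ^ 2 + (p - q) ^ 2)
      ≤ Real.sqrt ((p + q) ^ 2) := Real.sqrt_le_sqrt hsq
    _ = p + q := Real.sqrt_sq hsum
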